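/- For integers k ≥ m-1 and m ≥ 2, the sum over i from 0 to m-1 of (-1)^i · C(k, i) · C(k+m-i-2, m-i) equals (-1)^(m-1) · C(k, m). -/

import Mathlib

open Polynomial

lemma ring_choose_neg_nat (a j : ℕ) :
    Ring.choose (-(a : ℤ)) j = (-1) ^ j * (((a + j - 1).choose j : ℕ) : ℤ) := by
  refine nsmul_right_injective (Nat.factorial_ne_zero j) ?_
  simp only
  rw [← Ring.descPochhammer_eq_factorial_smul_choose]
  have h2 := ascPochhammer_eval_neg_eq_descPochhammer (R := ℤ) (-(a : ℤ)) j
  rw [neg_neg] at h2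
  have hdesc : (descPochhammer ℤ j).smeval (-(a : ℤ)) =
      (-1) ^ j * (ascPochhammer ℤ j).eval ((a : ℤ)) := by
    rw [h2, ← mul_assoc, ← mul_pow, ← eval_eq_smeval]
    simp
  have hasc : (ascPochhammer ℤ j).eval ((a : ℤ)) = ((a.ascFactorial j : ℕ) : ℤ) := by
    rw [← ascPochhammer_eval_cast, ascPochhammer_nat_eq_ascFactorial]
  rw [hdesc, hasc, Nat.ascFactorial_eq_factorial_mul_choose']
  rw [nsmul_eq_mul]
  push_cast
  ring

theorem stmt_3 (k m : ℕ) (hm : 2 ≤ m) (hk : m - 1 ≤ k) :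
    ∑ i ∈ Finset.range m,
        (-1 : ℤ) ^ i * (k.choose i : ℤ) * ((k + m - i - 2).choose (m - i) : ℤ) =
      (-1 : ℤ) ^ (m - 1) * (k.choose m : ℤ) := by
  have hk1 : 1 ≤ k := by omega
  have key := Ring.add_choose_eq (R := ℤ) (r := (k : ℤ)) (s := 1 - (k : ℤ)) m (Commute.all _ _)
  rw [add_sub_cancel] at key
  have h1 : Ring.choose (1 : ℤ) m = 0 := by
    rw [show (1 : ℤ) = ((1 : ℕ) : ℤ) by norm_num, Ring.choose_natCast,
      Nat.choose_eq_zero_of_lt (by omega)]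
    norm_num
  rw [h1, Finset.Nat.sum_antidiagonal_eq_sum_range_succ_mk, Finset.sum_range_succ,
    Nat.sub_self, Ring.choose_zero_right, mul_one] at key
  have hterm : ∀ i ∈ Finset.range m,
      Ring.choose ((k : ℤ)) i * Ring.choose (1 - (k : ℤ)) (m - i) =
      (-1) ^ m * ((-1 : ℤ) ^ i * (k.choose i : ℤ) * ((k + m - i - 2).choose (m - i) : ℤ)) := by
    intro i hi
    rw [Finset.mem_range] at hi
    have hneg : (1 - (k : ℤ)) = -((k - 1 : ℕ) : ℤ) := by push_cast [hk1]; ring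
    rw [hneg, ring_choose_neg_nat, Ring.choose_natCast,
      show (k - 1) + (m - i) - 1 = k + m - i - 2 by omega]
    have hpow : ((-1 : ℤ)) ^ (m - i) = (-1) ^ m * (-1) ^ i := by
      rw [← pow_add, show m + i = (m - i) + 2 * i by omega, pow_add, pow_mul]
      norm_num
    rw [hpow]
    ring
  rw [Finset.sum_congr rfl hterm, ← Finset.mul_sum, Ring.choose_natCast] at key
  have := key.symm
  have hS : (-1 : ℤ) ^ m * ∑ i ∈ Finset.range m,
      (-1 : ℤ) ^ i * (k.choose i : ℤ) * ((k + m - i - 2).choose (m - i) : ℤ) =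
      -(k.choose m : ℤ) := by linarith
  have hm1 : ((-1 : ℤ)) ^ m * ((-1 : ℤ) ^ m) = 1 := by
    rw [← pow_add, ← two_mul, pow_mul]; norm_num
  have hmm : (-1 : ℤ) ^ m = -(-1 : ℤ) ^ (m - 1) := by
    conv_lhs => rw [show m = (m - 1) + 1 by omega]
    rw [pow_succ]; ring
  calc ∑ i ∈ Finset.range m,
        (-1 : ℤ) ^ i * (k.choose i : ℤ) * ((k + m - i - 2).choose (m - i) : ℤ)
      = (-1 : ℤ) ^ m * ((-1 : ℤ) ^ m * ∑ i ∈ Finset.range m,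
        (-1 : ℤ) ^ i * (k.choose i : ℤ) * ((k + m - i - 2).choose (m - i) : ℤ)) := by
        rw [← mul_assoc, hm1, one_mul]
    _ = (-1 : ℤ) ^ m * (-(k.choose m : ℤ)) := by rw [hS]
    _ = (-1 : ℤ) ^ (m - 1) * (k.choose m : ℤ) := by rw [hmm]; ring
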